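/- Let σ ≥ 2, k ≥ 2, and T = b_1 a^k $ b_2 a^k $ ⋯ b_σ a^k $ over σ+2 distinct letters. Then el(T) = (k−1)(σ+1) + σ + (σ+2) and er(T) = 2(k−1) + (σ−1) + (σ+2); in particular el(T) ∈ Θ(kσ) and er(T) ∈ Θ(k + σ). -/

import Mathlib

open Finset

variable {α : Type*}

/-- Number of occurrences of `S` in `T`: positions `i` with `T[i..i+|S|-1] = S`. -/
def occ [DecidableEq α] (T S : List α) : ℕ :=
  ((Finset.range (T.length + 1)).filter fun i => (T.drop i).take S.length = S).card

/-- `S` is a maximal repeat of `T`. -/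
def MaxRepeat [DecidableEq α] (T S : List α) : Prop :=
  2 ≤ occ T S ∧ ∀ a : α, occ T (a :: S) < occ T S ∧ occ T (S ++ [a]) < occ T S

instance [DecidableEq α] [Fintype α] (T S : List α) : Decidable (MaxRepeat T S) := by
  unfold MaxRepeat; infer_instance

/-- The finite set of maximal repeats of `T`. -/
def MRset [DecidableEq α] [Fintype α] (T : List α) : Finset (List α) :=
  (T.tails.flatMap List.inits).toFinset.filter fun S => MaxRepeat T S

/-- Number of right extensions of `S` in `T`. -/
def rext [DecidableEq α] [Fintype α] (T S : List α) : ℕ :=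
  (Finset.univ.filter fun a : α => (S ++ [a]) <:+: T).card

/-- Number of left extensions of `S` in `T`. -/
def lext [DecidableEq α] [Fintype α] (T S : List α) : ℕ :=
  (Finset.univ.filter fun a : α => (a :: S) <:+: T).card

/-- Total number of right extensions of maximal repeats of `T`. -/
def er [DecidableEq α] [Fintype α] (T : List α) : ℕ := ∑ S ∈ MRset T, rext T S

/-- Total number of left extensions of maximal repeats of `T`. -/
def el [DecidableEq α] [Fintype α] (T : List α) : ℕ := ∑ S ∈ MRset T, lext T S

/-- Alphabet `{$, a, b_1, …, b_σ}` of size `σ + 2`. -/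
abbrev Alph (σ : ℕ) := Unit ⊕ Unit ⊕ Fin σ

/-- The letter `$`. -/
def dol (σ : ℕ) : Alph σ := Sum.inl ()

/-- The letter `a`. -/
def la (σ : ℕ) : Alph σ := Sum.inr (Sum.inl ())

/-- The letter `b_{j+1}`. -/
def lb (σ : ℕ) (j : Fin σ) : Alph σ := Sum.inr (Sum.inr j)

/-- The string `T = b_1 a^k $ b_2 a^k $ ⋯ b_σ a^k $`. -/
def W (σ k : ℕ) : List (Alph σ) :=
  (List.finRange σ).flatMap fun j =>
    lb σ j :: (List.replicate k (la σ) ++ [dol σ])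

namespace ElEr
open List

variable {σ k : ℕ}

def blk (σ k : ℕ) (j : Fin σ) : List (Alph σ) :=
  lb σ j :: (List.replicate k (la σ) ++ [dol σ])

lemma blk_length (j : Fin σ) : (blk σ k j).length = k + 2 := by simp [blk]

lemma W_eq (σ k : ℕ) : W σ k = (List.finRange σ).flatMap (blk σ k) := rfl

lemma length_W : (W σ k).length = σ * (k + 2) := by
  rw [W_eq, List.length_flatMap]
  have : (List.map (List.length ∘ blk σ k) (List.finRange σ)) = List.replicate σ (k+2) := by
    rw [List.eq_replicate_iff]
    constructor
    · simp
    · intro b hb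
      simp only [List.mem_map] at hb
      obtain ⟨j, _, rfl⟩ := hb
      simp [blk_length]
  rw [show (fun a => (blk σ k a).length) = (List.length ∘ blk σ k) from rfl, this, List.sum_replicate, smul_eq_mul]

lemma drop_W (q : ℕ) (hq : q ≤ σ) :
    (W σ k).drop (q * (k+2)) = ((List.finRange σ).drop q).flatMap (blk σ k) := by
  induction q with
  | zero => simp [W_eq]
  | succ q ih =>
    have hq' : q < σ := hq
    have h1 : (List.finRange σ).drop q = ⟨q, hq'⟩ :: (List.finRange σ).drop (q+1) := by
      rw [List.drop_eq_getElem_cons (by simpa using hq')]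
      congr 1
      simp [List.getElem_finRange, Fin.cast]
    have h2 : (W σ k).drop ((q+1) * (k+2)) = List.drop (k+2) ((W σ k).drop (q*(k+2))) := by
      rw [List.drop_drop]; ring_nf
    rw [h2, ih hq'.le, h1, List.flatMap_cons]
    rw [← blk_length (σ := σ) (k := k) ⟨q, hq'⟩, List.drop_left]

lemma drop_W' (q r : ℕ) (hq : q < σ) (hr : r ≤ k + 2) :
    (W σ k).drop (q * (k+2) + r) =
      (blk σ k ⟨q, hq⟩).drop r ++ ((List.finRange σ).drop (q+1)).flatMap (blk σ k) := by
  have h1 : (List.finRange σ).drop q = ⟨q, hq⟩ :: (List.finRange σ).drop (q+1) := by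
    rw [List.drop_eq_getElem_cons (by simpa using hq)]
    congr 1
    simp [List.getElem_finRange, Fin.cast]
  have h2 : (W σ k).drop (q * (k+2) + r) = List.drop r ((W σ k).drop (q*(k+2))) := by
    rw [List.drop_drop]
  rw [h2, drop_W q hq.le, h1, List.flatMap_cons, List.drop_append]
  have : r - (blk σ k ⟨q, hq⟩).length = 0 := by rw [blk_length]; omega
  rw [this, List.drop_zero]

lemma getW (q r : ℕ) (hq : q < σ) (hr : r < k + 2) :
    (W σ k)[q * (k+2) + r]? = (blk σ k ⟨q, hq⟩)[r]? := by
  rw [← List.getElem?_drop, drop_W q hq.le]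
  have h1 : (List.finRange σ).drop q = ⟨q, hq⟩ :: (List.finRange σ).drop (q+1) := by
    rw [List.drop_eq_getElem_cons (by simpa using hq)]
    congr 1
    simp [List.getElem_finRange, Fin.cast]
  rw [h1, List.flatMap_cons, List.getElem?_append]
  rw [if_pos (by rw [blk_length]; omega)]

lemma blk_get_zero (j : Fin σ) : (blk σ k j)[0]? = some (lb σ j) := by simp [blk]

lemma blk_get_a {r : ℕ} (j : Fin σ) (h1 : 1 ≤ r) (h2 : r ≤ k) :
    (blk σ k j)[r]? = some (la σ) := by
  obtain ⟨s, rfl⟩ : ∃ s, r = s + 1 := ⟨r - 1, by omega⟩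
  simp only [blk, List.getElem?_cons_succ, List.getElem?_append, List.length_replicate]
  rw [if_pos (by omega), List.getElem?_replicate, if_pos (by omega)]

lemma blk_get_d (j : Fin σ) : (blk σ k j)[k+1]? = some (dol σ) := by
  simp only [blk, List.getElem?_cons_succ, List.getElem?_append, List.length_replicate]
  rw [if_neg (by omega)]
  simp

lemma getW_b (q : ℕ) (hq : q < σ) : (W σ k)[q * (k+2)]? = some (lb σ ⟨q, hq⟩) := by
  have := getW (σ := σ) (k := k) q 0 hq (by omega)
  simpa using this.trans (blk_get_zero _)

lemma getW_a (q r : ℕ) (hq : q < σ) (h1 : 1 ≤ r) (h2 : r ≤ k) :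
    (W σ k)[q * (k+2) + r]? = some (la σ) :=
  (getW q r hq (by omega)).trans (blk_get_a _ h1 h2)

lemma getW_d (q : ℕ) (hq : q < σ) : (W σ k)[q * (k+2) + (k+1)]? = some (dol σ) :=
  (getW q (k+1) hq (by omega)).trans (blk_get_d _)

lemma getW_classify {n : ℕ} {c : Alph σ} (h : (W σ k)[n]? = some c) :
    (∃ j : Fin σ, c = lb σ j ∧ n = (j : ℕ) * (k+2)) ∨
    (c = la σ ∧ 1 ≤ n % (k+2) ∧ n % (k+2) ≤ k) ∨
    (c = dol σ ∧ n % (k+2) = k+1) := by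
  have hn : n < σ * (k+2) := by
    have := (List.getElem?_eq_some_iff.mp h).1
    rwa [length_W] at this
  have hq : n / (k+2) < σ := by
    rw [Nat.div_lt_iff_lt_mul (by omega)]
    omega
  have hr : n % (k+2) < k + 2 := Nat.mod_lt _ (by omega)
  have hn' : n = (n / (k+2)) * (k+2) + n % (k+2) := by
    rw [Nat.div_add_mod']
  rw [hn', getW _ _ hq hr] at h
  rcases Nat.lt_or_ge (n % (k+2)) 1 with h0 | h1
  · have hz : n % (k+2) = 0 := by omega
    rw [hz, blk_get_zero] at h
    left
    exact ⟨⟨n / (k+2), hq⟩, (Option.some_inj.mp h).symm, by simp; omega⟩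
  · rcases Nat.lt_or_ge (n % (k+2)) (k+1) with h2 | h3
    · rw [blk_get_a _ h1 (by omega)] at h
      right; left
      exact ⟨(Option.some_inj.mp h).symm, h1, by omega⟩
    · have hd : n % (k+2) = k + 1 := by omega
      rw [hd, blk_get_d] at h
      right; right
      exact ⟨(Option.some_inj.mp h).symm, hd⟩

lemma dol_ne_la : dol σ ≠ la σ := by simp [dol, la]
lemma dol_ne_lb (j : Fin σ) : dol σ ≠ lb σ j := by simp [dol, lb]
lemma la_ne_lb (j : Fin σ) : la σ ≠ lb σ j := by simp [la, lb]
lemma lb_inj {i j : Fin σ} (h : lb σ i = lb σ j) : i = j := by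
  simpa [lb] using h

lemma eq_b_pos {n : ℕ} {j : Fin σ} (h : (W σ k)[n]? = some (lb σ j)) :
    n = (j : ℕ) * (k + 2) := by
  rcases getW_classify h with ⟨j', hj, hn⟩ | ⟨hc, _⟩ | ⟨hc, _⟩
  · rw [lb_inj hj]; exact hn
  · exact absurd hc.symm (la_ne_lb j)
  · exact absurd hc.symm (dol_ne_lb j)

lemma eq_a_pos {n : ℕ} (h : (W σ k)[n]? = some (la σ)) :
    1 ≤ n % (k+2) ∧ n % (k+2) ≤ k := by
  rcases getW_classify h with ⟨j', hj, _⟩ | ⟨_, h1, h2⟩ | ⟨hc, _⟩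
  · exact absurd hj (la_ne_lb j')
  · exact ⟨h1, h2⟩
  · exact absurd hc dol_ne_la.symm

lemma eq_d_pos {n : ℕ} (h : (W σ k)[n]? = some (dol σ)) : n % (k+2) = k + 1 := by
  rcases getW_classify h with ⟨j', hj, _⟩ | ⟨hc, _⟩ | ⟨_, h2⟩
  · exact absurd hj (dol_ne_lb j')
  · exact absurd hc dol_ne_la
  · exact h2


lemma mod_add_eq {n p t r : ℕ} (h : p % n = r) (hrt : r + t < n) : (p + t) % n = r + t := by
  have ht : t % n = t := Nat.mod_eq_of_lt (by omega)
  rw [Nat.add_mod, h, ht, Nat.mod_eq_of_lt hrt]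

lemma mod_succ_top {n p : ℕ} (hn : 2 ≤ n) (h : p % n = n - 1) : (p + 1) % n = 0 := by
  rw [Nat.add_mod, h, Nat.mod_eq_of_lt (show 1 < n by omega)]
  have : n - 1 + 1 = n := by omega
  rw [this, Nat.mod_self]

lemma mod_pred {n p r : ℕ} (h : p % n = r) (hr : 1 ≤ r) : (p - 1) % n = r - 1 := by
  rcases Nat.eq_zero_or_pos n with h0 | h0
  · subst h0; simp only [Nat.mod_zero] at h ⊢; omega
  have hrn : r < n := by rw [← h]; exact Nat.mod_lt _ h0
  have hd := Nat.div_add_mod p n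
  rw [h] at hd
  generalize hq : n * (p / n) = q at hd
  have h2 : p - 1 = q + (r - 1) := by omega
  rw [h2, ← hq, Nat.mul_add_mod, Nat.mod_eq_of_lt (by omega)]

lemma window_getElem? {T S : List α} {p : ℕ} (h : (T.drop p).take S.length = S)
    {t : ℕ} (ht : t < S.length) : T[p + t]? = S[t]? := by
  rw [← List.getElem?_drop]
  conv_rhs => rw [← h]
  rw [List.getElem?_take, if_pos ht]

lemma window_le {T S : List α} {p : ℕ} (h : (T.drop p).take S.length = S)
    (hS : S ≠ []) : p + S.length ≤ T.length := by
  have hlen := congrArg List.length h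
  rw [List.length_take, List.length_drop] at hlen
  have hS' : S.length ≠ 0 := fun e => hS (List.length_eq_zero_iff.mp e)
  omega

lemma window_snoc {T S : List α} {p : ℕ} {c : α} (h : (T.drop p).take S.length = S)
    (hc : T[p + S.length]? = some c) :
    (T.drop p).take (S ++ [c]).length = S ++ [c] := by
  rw [List.length_append, List.length_singleton, List.take_succ, h]
  congr 1
  rw [List.getElem?_drop, hc]
  rfl

lemma window_cons {T S : List α} {p : ℕ} {c : α} (h : (T.drop (p+1)).take S.length = S)
    (hc : T[p]? = some c) :
    (T.drop p).take (c :: S).length = c :: S := by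
  have hp : p < T.length := (List.getElem?_eq_some_iff.mp hc).1
  rw [List.drop_eq_getElem_cons hp, List.length_cons, List.take_succ_cons, h]
  congr 1
  have := (List.getElem?_eq_some_iff.mp hc).2
  simp [this]

lemma infix_of_window {T S : List α} {p : ℕ} (h : (T.drop p).take S.length = S) :
    S <:+: T := by
  rw [← h]
  exact ((List.take_prefix _ _).isInfix).trans ((List.drop_suffix _ _).isInfix)

lemma window_of_infix {T S : List α} (h : S <:+: T) :
    ∃ p, (T.drop p).take S.length = S := by
  obtain ⟨u, v, huv⟩ := h
  refine ⟨u.length, ?_⟩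
  rw [← huv, List.append_assoc, List.drop_left, List.take_left]

lemma mem_window [DecidableEq α] {T S : List α} {p : ℕ} (hS : S ≠ [])
    (h : (T.drop p).take S.length = S) :
    p ∈ (Finset.range (T.length + 1)).filter fun i => (T.drop i).take S.length = S := by
  classical
  have := window_le h hS
  have hS' : S.length ≠ 0 := fun e => hS (List.length_eq_zero_iff.mp e)
  simp only [Finset.mem_filter, Finset.mem_range]
  exact ⟨by omega, h⟩

lemma two_le_occ [DecidableEq α] {T S : List α} {p q : ℕ} (hS : S ≠ [])
    (hp : (T.drop p).take S.length = S) (hq : (T.drop q).take S.length = S)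
    (hpq : p ≠ q) : 2 ≤ occ T S := by
  classical
  have hsub : ({p, q} : Finset ℕ) ⊆
      (Finset.range (T.length + 1)).filter fun i => (T.drop i).take S.length = S := by
    intro x hx
    simp only [Finset.mem_insert, Finset.mem_singleton] at hx
    rcases hx with rfl | rfl
    · exact mem_window hS hp
    · exact mem_window hS hq
  calc 2 = ({p, q} : Finset ℕ).card := (Finset.card_pair hpq).symm
    _ ≤ _ := Finset.card_le_card hsub

lemma occ_snoc_lt [DecidableEq α] {T S : List α} (c : α) {p : ℕ} (hS : S ≠ [])
    (hp : (T.drop p).take S.length = S)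
    (hne : (T.drop p).take (S.length + 1) ≠ S ++ [c]) :
    occ T (S ++ [c]) < occ T S := by
  classical
  unfold occ
  apply Finset.card_lt_card
  constructor
  · intro i hi
    simp only [Finset.mem_filter, Finset.mem_range, List.length_append,
      List.length_singleton] at hi ⊢
    refine ⟨hi.1, ?_⟩
    have hw := hi.2
    calc (T.drop i).take S.length = ((T.drop i).take (S.length + 1)).take S.length := by
          rw [List.take_take, Nat.min_eq_left (by omega)]
      _ = (S ++ [c]).take S.length := by rw [hw]
      _ = S := List.take_left
  · intro hsub
    have hmem := hsub (mem_window hS hp)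
    simp only [Finset.mem_filter, List.length_append, List.length_singleton] at hmem
    exact hne hmem.2

lemma occ_cons_lt [DecidableEq α] {T S : List α} (c : α) {p : ℕ} (hS : S ≠ [])
    (hp : (T.drop p).take S.length = S) (hp1 : 1 ≤ p)
    (hne : (T.drop (p-1)).take (S.length + 1) ≠ c :: S) :
    occ T (c :: S) < occ T S := by
  classical
  have himg : ((Finset.range (T.length + 1)).filter
        fun i => (T.drop i).take (c :: S).length = c :: S).image (· + 1) ⊆
      (Finset.range (T.length + 1)).filter fun i => (T.drop i).take S.length = S := by
    intro x hx
    simp only [Finset.mem_image, Finset.mem_filter, Finset.mem_range] at hx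
    obtain ⟨i, ⟨_, hw⟩, rfl⟩ := hx
    have hw2 : (T.drop (i+1)).take S.length = S := by
      have ht := congrArg (List.drop 1) hw
      rw [List.drop_take, List.drop_drop] at ht
      simpa using ht
    exact mem_window hS hw2
  have hinj : Function.Injective (· + 1 : ℕ → ℕ) := add_left_injective 1
  have hcard : (((Finset.range (T.length + 1)).filter
      fun i => (T.drop i).take (c :: S).length = c :: S).image (· + 1)).card
      = occ T (c :: S) := Finset.card_image_of_injective _ hinj
  have hlt : (((Finset.range (T.length + 1)).filter
      fun i => (T.drop i).take (c :: S).length = c :: S).image (· + 1)).card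
      < ((Finset.range (T.length + 1)).filter
      fun i => (T.drop i).take S.length = S).card := by
    apply Finset.card_lt_card
    refine ⟨himg, fun hsub => ?_⟩
    have hmem := hsub (mem_window hS hp)
    simp only [Finset.mem_image, Finset.mem_filter, Finset.mem_range, List.length_cons] at hmem
    obtain ⟨i, ⟨_, hw⟩, hip⟩ := hmem
    have : i = p - 1 := by omega
    subst this
    exact hne hw
  calc occ T (c :: S) = _ := hcard.symm
    _ < _ := hlt

/-- occurrences of `S` give occurrences of `c :: S` shifted; converse inequality tool. -/
lemma occ_le_occ_cons [DecidableEq α] {T S : List α} (c : α)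
    (h : ∀ p ∈ (Finset.range (T.length + 1)).filter
        (fun i => (T.drop i).take S.length = S),
        1 ≤ p ∧ (T.drop (p-1)).take (S.length + 1) = c :: S) :
    occ T S ≤ occ T (c :: S) := by
  classical
  have hsub : ((Finset.range (T.length + 1)).filter
        fun i => (T.drop i).take S.length = S) ⊆
      ((Finset.range (T.length + 1)).filter
        fun i => (T.drop i).take (c :: S).length = c :: S).image (· + 1) := by
    intro p hp
    obtain ⟨hp1, hw⟩ := h p hp
    simp only [Finset.mem_filter, Finset.mem_range] at hp
    simp only [Finset.mem_image, Finset.mem_filter, Finset.mem_range, List.length_cons]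
    exact ⟨p - 1, ⟨by omega, hw⟩, by omega⟩
  have hinj : Function.Injective (· + 1 : ℕ → ℕ) := add_left_injective 1
  calc occ T S ≤ _ := Finset.card_le_card hsub
    _ = occ T (c :: S) := Finset.card_image_of_injective _ hinj

lemma occ_le_occ_snoc [DecidableEq α] {T S : List α} (c : α)
    (h : ∀ p ∈ (Finset.range (T.length + 1)).filter
        (fun i => (T.drop i).take S.length = S),
        (T.drop p).take (S.length + 1) = S ++ [c]) :
    occ T S ≤ occ T (S ++ [c]) := by
  classical
  apply Finset.card_le_card
  intro p hp
  have hw := h p hp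
  simp only [Finset.mem_filter, Finset.mem_range] at hp ⊢
  refine ⟨hp.1, ?_⟩
  simpa using hw



-- specific windows in W

lemma take_append_left' {β : Type*} {l₁ l₂ : List β} {n : ℕ} (h : n ≤ l₁.length) :
    (l₁ ++ l₂).take n = l₁.take n := by
  rw [List.take_append, Nat.sub_eq_zero_of_le h, List.take_zero,
    List.append_nil]

lemma blk_drop {q : ℕ} (hq : q < σ) {s : ℕ} (hs : s ≤ k) :
    (blk σ k ⟨q, hq⟩).drop (s+1) = List.replicate (k-s) (la σ) ++ [dol σ] := by
  simp only [blk, List.drop_succ_cons]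
  rw [List.drop_append, List.drop_replicate]
  congr 1
  rw [List.length_replicate, Nat.sub_eq_zero_of_le hs, List.drop_zero]

lemma window_as {q r i : ℕ} (hq : q < σ) (hr : 1 ≤ r) (hri : r + i ≤ k+1) :
    ((W σ k).drop (q*(k+2)+r)).take i = List.replicate i (la σ) := by
  rw [drop_W' q r hq (by omega)]
  obtain ⟨s, rfl⟩ : ∃ s, r = s + 1 := ⟨r - 1, by omega⟩
  rw [blk_drop hq (by omega), List.append_assoc, take_append_left' (by simp; omega),
    List.take_replicate, Nat.min_eq_left (by omega)]

lemma window_ad {q r i : ℕ} (hq : q < σ) (hr : 1 ≤ r) (heq : r + i = k+1) :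
    ((W σ k).drop (q*(k+2)+r)).take (i+1) = List.replicate i (la σ) ++ [dol σ] := by
  rw [drop_W' q r hq (by omega)]
  obtain ⟨s, rfl⟩ : ∃ s, r = s + 1 := ⟨r - 1, by omega⟩
  rw [blk_drop hq (by omega)]
  have hki : k - s = i := by omega
  rw [hki, List.take_left' (by simp)]

lemma window_b {q i : ℕ} (hq : q < σ) (hik : i ≤ k) :
    ((W σ k).drop (q*(k+2))).take (i+1) = lb σ ⟨q, hq⟩ :: List.replicate i (la σ) := by
  have h0 : q * (k+2) = q * (k+2) + 0 := by omega
  rw [h0, drop_W' q 0 hq (by omega), List.drop_zero]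
  show (((lb σ ⟨q,hq⟩ :: (List.replicate k (la σ) ++ [dol σ]))) ++ _).take (i+1) = _
  rw [List.cons_append, List.take_succ_cons]
  congr 1
  rw [List.append_assoc, take_append_left' (by simp; omega), List.take_replicate,
    Nat.min_eq_left hik]

lemma window_blk {q : ℕ} (hq : q < σ) :
    ((W σ k).drop (q*(k+2))).take (k+2) = blk σ k ⟨q, hq⟩ := by
  have h0 : q * (k+2) = q * (k+2) + 0 := by omega
  rw [h0, drop_W' q 0 hq (by omega), List.drop_zero, List.take_left' (blk_length _)]

lemma finRange_drop_cons {q : ℕ} (hq : q < σ) :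
    (List.finRange σ).drop q = ⟨q, hq⟩ :: (List.finRange σ).drop (q+1) := by
  rw [List.drop_eq_getElem_cons (by simpa using hq)]
  congr 1
  simp [List.getElem_finRange, Fin.cast]

lemma window_adb {q : ℕ} (hq1 : q + 1 < σ) :
    ((W σ k).drop (q*(k+2)+1)).take (k+2)
      = (List.replicate k (la σ) ++ [dol σ]) ++ [lb σ ⟨q+1, hq1⟩] := by
  rw [drop_W' q 1 (by omega) (by omega), finRange_drop_cons hq1, List.flatMap_cons]
  have h1 : (blk σ k ⟨q, by omega⟩).drop 1 = List.replicate k (la σ) ++ [dol σ] := by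
    have := blk_drop (k := k) (show q < σ by omega) (show 0 ≤ k by omega)
    simpa using this
  rw [h1, List.take_append]
  have hl : (List.replicate k (la σ) ++ [dol σ]).length = k + 1 := by simp
  rw [List.take_of_length_le (by omega), hl]
  congr 1
  have : k + 2 - (k+1) = 1 := by omega
  rw [this]
  show (((lb σ ⟨q+1,hq1⟩ :: (List.replicate k (la σ) ++ [dol σ]))) ++ _).take 1 = _
  rw [List.cons_append, List.take_succ_cons, List.take_zero]

lemma drop_last (hσ : 1 ≤ σ) :
    (W σ k).drop ((σ-1)*(k+2)+1) = List.replicate k (la σ) ++ [dol σ] := by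
  rw [drop_W' (σ-1) 1 (by omega) (by omega)]
  have h1 : (blk σ k ⟨σ-1, by omega⟩).drop 1 = List.replicate k (la σ) ++ [dol σ] := by
    have := blk_drop (k := k) (show σ-1 < σ by omega) (show 0 ≤ k by omega)
    simpa using this
  have h2 : (List.finRange σ).drop (σ-1+1) = [] := by
    apply List.drop_eq_nil_of_le
    simp; omega
  rw [h1, h2, List.flatMap_nil, List.append_nil]

-- non-infix lemmas

lemma not_infix_d_then {S : List (Alph σ)} {t : ℕ} {c : Alph σ}
    (h0 : S[t]? = some (dol σ)) (h1 : S[t+1]? = some c)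
    (hc : c = la σ ∨ c = dol σ) : ¬ S <:+: W σ k := by
  intro hinf
  obtain ⟨p, hw⟩ := window_of_infix hinf
  have ht1 : t + 1 < S.length := (List.getElem?_eq_some_iff.mp h1).1
  have e0 := window_getElem? hw (show t < S.length by omega)
  rw [h0] at e0
  have e1 := window_getElem? hw ht1
  rw [h1] at e1
  have e1' : (W σ k)[p+t+1]? = some c := by
    rw [show p+t+1 = p+(t+1) by omega]; exact e1
  have r0 := eq_d_pos e0
  have r1 : (p + t + 1) % (k+2) = 0 :=
    mod_succ_top (by omega) (by rw [r0]; omega)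
  rcases hc with rfl | rfl
  · have := eq_a_pos e1'
    omega
  · have := eq_d_pos e1'
    omega

lemma not_infix_rep_succ : ¬ (List.replicate (k+1) (la σ)) <:+: W σ k := by
  intro hinf
  obtain ⟨p, hw⟩ := window_of_infix hinf
  have echar : ∀ t, t < k+1 → (W σ k)[p+t]? = some (la σ) := by
    intro t ht
    have := window_getElem? hw (show t < (List.replicate (k+1) (la σ)).length by simpa using ht)
    rwa [List.getElem?_replicate, if_pos ht] at this
  have r0 : 1 ≤ p % (k+2) ∧ p % (k+2) ≤ k := by
    have := eq_a_pos (echar 0 (by omega))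
    simpa using this
  have hm : (p + (k+1 - p % (k+2))) % (k+2) = p % (k+2) + (k+1 - p % (k+2)) :=
    mod_add_eq rfl (by omega)
  have h2 := eq_a_pos (echar (k+1 - p % (k+2)) (by omega))
  rw [hm] at h2
  omega

lemma not_infix_ab {i : ℕ} (hi : 1 ≤ i) (j : Fin σ) :
    ¬ (List.replicate i (la σ) ++ [lb σ j]) <:+: W σ k := by
  intro hinf
  obtain ⟨p, hw⟩ := window_of_infix hinf
  have hlen : (List.replicate i (la σ) ++ [lb σ j]).length = i + 1 := by simp
  have eb : (W σ k)[p+i]? = some (lb σ j) := by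
    have := window_getElem? hw (show i < _ by rw [hlen]; omega)
    rwa [List.getElem?_append, if_neg (by simp), List.length_replicate,
      Nat.sub_self] at this
  have ea : (W σ k)[p+(i-1)]? = some (la σ) := by
    have := window_getElem? hw (show i-1 < _ by rw [hlen]; omega)
    rwa [List.getElem?_append, if_pos (by simp; omega), List.getElem?_replicate,
      if_pos (by omega)] at this
  have hpi : p + i = (j : ℕ) * (k+2) := eq_b_pos eb
  have hra := eq_a_pos ea
  rcases Nat.eq_zero_or_pos (j : ℕ) with hj | hj
  · rw [hj] at hpi; simp at hpi; omega
  · obtain ⟨c', hc'⟩ : ∃ c', (j : ℕ) = c' + 1 := ⟨(j:ℕ) - 1, by omega⟩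
    have hmul : (j : ℕ) * (k+2) = c' * (k+2) + (k+2) := by rw [hc', Nat.succ_mul]
    have hidx : p + (i-1) = c' * (k+2) + (k+1) := by omega
    have : (p + (i-1)) % (k+2) = k+1 := by
      rw [hidx, Nat.mul_add_mod', Nat.mod_eq_of_lt (by omega)]
    omega

lemma not_infix_b_at {S : List (Alph σ)} {t : ℕ} {j : Fin σ} (ht : 1 ≤ t)
    (h : S[t]? = some (lb σ j)) (hj : (j : ℕ) = 0) : ¬ S <:+: W σ k := by
  intro hinf
  obtain ⟨p, hw⟩ := window_of_infix hinf
  have ht' : t < S.length := (List.getElem?_eq_some_iff.mp h).1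
  have e := window_getElem? hw ht'
  rw [h] at e
  have := eq_b_pos e
  rw [hj] at this
  simp at this
  omega


lemma getW_a' {n : ℕ} (hn : n < σ*(k+2)) (h1 : 1 ≤ n % (k+2)) (h2 : n % (k+2) ≤ k) :
    (W σ k)[n]? = some (la σ) := by
  have hq : n / (k+2) < σ := by rw [Nat.div_lt_iff_lt_mul (by omega)]; omega
  have hn' : n = (n/(k+2))*(k+2) + n%(k+2) := by rw [Nat.div_add_mod']
  rw [hn']
  exact getW_a _ _ hq h1 h2

lemma getW_d' {n : ℕ} (hn : n < σ*(k+2)) (h : n % (k+2) = k+1) :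
    (W σ k)[n]? = some (dol σ) := by
  have hq : n / (k+2) < σ := by rw [Nat.div_lt_iff_lt_mul (by omega)]; omega
  have hn' : n = (n/(k+2))*(k+2) + (k+1) := by
    conv_lhs => rw [← Nat.div_add_mod' n (k+2)]
    rw [h]
  rw [hn']
  exact getW_d _ hq

lemma occ_nil' : occ (W σ k) [] = σ*(k+2) + 1 := by
  unfold occ
  rw [Finset.filter_true_of_mem (fun i _ => by simp), Finset.card_range, length_W]

lemma max_nil (hσ : 1 ≤ σ) : MaxRepeat (W σ k) ([] : List (Alph σ)) := by
  have hsingle : ∀ c : Alph σ, occ (W σ k) [c] < occ (W σ k) [] := by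
    intro c
    rw [occ_nil']
    have hsub : ((Finset.range ((W σ k).length + 1)).filter
        fun i => ((W σ k).drop i).take [c].length = [c]) ⊆ Finset.range (σ*(k+2)) := by
      intro i hi
      simp only [Finset.mem_filter, Finset.mem_range] at hi ⊢
      have := window_le hi.2 (by simp)
      rw [length_W] at this
      simp at this
      omega
    calc occ (W σ k) [c] ≤ (Finset.range (σ*(k+2))).card := Finset.card_le_card hsub
      _ = σ*(k+2) := Finset.card_range _
      _ < σ*(k+2) + 1 := by omega
  refine ⟨?_, fun c => ⟨hsingle c, by simpa using hsingle c⟩⟩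
  rw [occ_nil']
  have : 1*1 ≤ σ*(k+2) := Nat.mul_le_mul hσ (by omega)
  omega

lemma max_rep {i : ℕ} (hσ : 2 ≤ σ) (h1 : 1 ≤ i) (h2 : i < k) :
    MaxRepeat (W σ k) (List.replicate i (la σ)) := by
  have hS : (List.replicate i (la σ)) ≠ [] := by
    intro h
    have := congrArg List.length h
    simp at this
    omega
  have hlen : (List.replicate i (la σ)).length = i := by simp
  have w1 : ((W σ k).drop 1).take (List.replicate i (la σ)).length
      = List.replicate i (la σ) := by
    have := window_as (q := 0) (r := 1) (i := i) (k := k) (σ := σ) (by omega) (by omega) (by omega)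
    simpa using this
  have w2 : ((W σ k).drop (k+3)).take (List.replicate i (la σ)).length
      = List.replicate i (la σ) := by
    have := window_as (q := 1) (r := 1) (i := i) (k := k) (σ := σ) (by omega) (by omega) (by omega)
    rw [hlen]
    rw [show (1*(k+2)+1) = k + 3 by omega] at this
    exact this
  have w3 : ((W σ k).drop (k+1-i)).take (List.replicate i (la σ)).length
      = List.replicate i (la σ) := by
    have := window_as (q := 0) (r := k+1-i) (i := i) (k := k) (σ := σ) (by omega) (by omega) (by omega)
    rw [hlen]
    rw [show (0*(k+2)+(k+1-i)) = k+1-i by omega] at this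
    exact this
  refine ⟨two_le_occ hS w1 w2 (by omega), fun c => ⟨?_, ?_⟩⟩
  · -- left extension
    by_cases hc : c = lb σ ⟨0, by omega⟩
    · apply occ_cons_lt c hS w3 (by omega)
      have hwin : ((W σ k).drop (k+1-i-1)).take (i+1) = List.replicate (i+1) (la σ) := by
        have := window_as (q := 0) (r := k-i) (i := i+1) (k := k) (σ := σ) (by omega) (by omega) (by omega)
        rw [show (0*(k+2)+(k-i)) = k+1-i-1 by omega] at this
        exact this
      rw [hlen, hwin, List.replicate_succ]
      intro h
      have := (List.cons.injEq _ _ _ _).mp h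
      exact (la_ne_lb _) (this.1.trans hc)
    · apply occ_cons_lt c hS w1 (by omega)
      have hwin : ((W σ k).drop 0).take (i+1) = lb σ ⟨0, by omega⟩ :: List.replicate i (la σ) := by
        have := window_b (q := 0) (i := i) (k := k) (σ := σ) (by omega) (by omega)
        simpa using this
      rw [hlen, show (1:ℕ)-1 = 0 from rfl, hwin]
      intro h
      exact hc ((List.cons.injEq _ _ _ _).mp h).1.symm
  · -- right extension
    by_cases hc : c = la σ
    · apply occ_snoc_lt c hS w3
      have hwin : ((W σ k).drop (k+1-i)).take (i+1)
          = List.replicate i (la σ) ++ [dol σ] := by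
        have := window_ad (q := 0) (r := k+1-i) (i := i) (k := k) (σ := σ) (by omega) (by omega) (by omega)
        rw [show (0*(k+2)+(k+1-i)) = k+1-i by omega] at this
        exact this
      rw [hlen, hwin]
      intro h
      have := List.append_cancel_left h
      have : dol σ = c := by simpa using this
      exact dol_ne_la (hc ▸ this)
    · apply occ_snoc_lt c hS w1
      have hwin : ((W σ k).drop 1).take (i+1) = List.replicate (i+1) (la σ) := by
        have := window_as (q := 0) (r := 1) (i := i+1) (k := k) (σ := σ) (by omega) (by omega) (by omega)
        simpa using this
      rw [hlen, hwin, List.replicate_succ']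
      intro h
      have := List.append_cancel_left h
      have : la σ = c := by simpa using this
      exact hc this.symm

lemma max_last (hσ : 2 ≤ σ) (hk : 1 ≤ k) :
    MaxRepeat (W σ k) (List.replicate k (la σ) ++ [dol σ]) := by
  set S : List (Alph σ) := List.replicate k (la σ) ++ [dol σ] with hSdef
  have hS : S ≠ [] := by simp [hSdef]
  have hlen : S.length = k + 1 := by simp [hSdef]
  have w1 : ((W σ k).drop 1).take S.length = S := by
    rw [hlen]
    have := window_ad (q := 0) (r := 1) (i := k) (k := k) (σ := σ) (by omega) (by omega) (by omega)
    simpa using this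
  have w2 : ((W σ k).drop (k+3)).take S.length = S := by
    rw [hlen]
    have := window_ad (q := 1) (r := 1) (i := k) (k := k) (σ := σ) (by omega) (by omega) (by omega)
    rw [show (1*(k+2)+1) = k+3 by omega] at this
    exact this
  have wlast : ((W σ k).drop ((σ-1)*(k+2)+1)).take S.length = S := by
    rw [hlen, drop_last (by omega), ← hSdef, List.take_of_length_le (by omega)]
  refine ⟨two_le_occ hS w1 w2 (by omega), fun c => ⟨?_, ?_⟩⟩
  · by_cases hc : c = lb σ ⟨0, by omega⟩
    · apply occ_cons_lt c hS w2 (by omega)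
      have hwin : ((W σ k).drop (k+2)).take (k+2) = lb σ ⟨1, by omega⟩ :: S := by
        have := window_blk (q := 1) (k := k) (σ := σ) (by omega)
        rw [show (1*(k+2)) = k+2 by omega] at this
        rw [this]
        simp [blk, hSdef]
      rw [hlen, show k+3-1 = k+2 by omega, show k+1+1 = k+2 by omega, hwin]
      intro h
      have h1 := ((List.cons.injEq _ _ _ _).mp h).1
      rw [hc] at h1
      have h2 := congrArg Fin.val (lb_inj h1)
      simp at h2
    · apply occ_cons_lt c hS w1 (by omega)
      have hwin : ((W σ k).drop 0).take (k+2) = lb σ ⟨0, by omega⟩ :: S := by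
        have := window_blk (q := 0) (k := k) (σ := σ) (by omega)
        simp only [Nat.zero_mul] at this
        rw [this]
        simp [blk, hSdef]
      rw [hlen, show (1:ℕ)-1 = 0 from rfl, show k+1+1 = k+2 by omega, hwin]
      intro h
      exact hc ((List.cons.injEq _ _ _ _).mp h).1.symm
  · apply occ_snoc_lt c hS wlast
    rw [hlen, drop_last (by omega), ← hSdef, List.take_of_length_le (by omega)]
    intro h
    have := congrArg List.length h
    simp at this


lemma mr_subset (hσ : 2 ≤ σ) (hk : 2 ≤ k) {S : List (Alph σ)}
    (hmr : MaxRepeat (W σ k) S) :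
    (∃ i < k, S = List.replicate i (la σ)) ∨ S = List.replicate k (la σ) ++ [dol σ] := by
  classical
  rcases eq_or_ne S [] with rfl | hS
  · exact Or.inl ⟨0, by omega, rfl⟩
  obtain ⟨hocc, hmax⟩ := hmr
  obtain ⟨p1, hp1, p2, hp2, hne⟩ := Finset.one_lt_card.mp (by omega : 1 < occ (W σ k) S)
  have hw1 : ((W σ k).drop p1).take S.length = S := (Finset.mem_filter.mp hp1).2
  have hw2 : ((W σ k).drop p2).take S.length = S := (Finset.mem_filter.mp hp2).2
  have hm1 : 1 ≤ S.length := by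
    rcases Nat.eq_zero_or_pos S.length with h | h
    · exact absurd (List.length_eq_zero_iff.mp h) hS
    · exact h
  -- no b's in S
  have hb : ∀ t, t < S.length → ∀ j : Fin σ, S[t]? ≠ some (lb σ j) := by
    intro t ht j h
    have e1 := window_getElem? hw1 ht
    have e2 := window_getElem? hw2 ht
    rw [h] at e1 e2
    have q1 := eq_b_pos e1
    have q2 := eq_b_pos e2
    omega
  -- character classification
  have key : ∀ t, t < S.length →
      S[t]? = some (la σ) ∨ (S[t]? = some (dol σ) ∧ t + 1 = S.length) := by
    intro t ht
    have hsome : S[t]? = some (S[t]'ht) := List.getElem?_eq_getElem ht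
    rcases hx : S[t]'ht with u | u | j
    · -- dol
      cases u
      right
      refine ⟨by rw [hsome, hx]; rfl, ?_⟩
      by_contra hne2
      have ht1 : t + 1 < S.length := by omega
      have e0 := window_getElem? hw1 ht
      rw [hsome, hx] at e0
      have r0 : (p1 + t) % (k+2) = k + 1 := eq_d_pos (by exact e0)
      have r1 : (p1 + t + 1) % (k+2) = 0 :=
        mod_succ_top (by omega) (by rw [r0]; omega)
      have hsome1 : S[t+1]? = some (S[t+1]'ht1) := List.getElem?_eq_getElem ht1
      have e1 := window_getElem? hw1 ht1
      rw [hsome1] at e1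
      have e1' : (W σ k)[p1+t+1]? = some (S[t+1]'ht1) := by
        rw [show p1+t+1 = p1+(t+1) by omega]; exact e1
      rcases hy : S[t+1]'ht1 with v | v | j
      · cases v
        rw [hy] at e1'
        have := eq_d_pos (by exact e1')
        omega
      · cases v
        rw [hy] at e1'
        have := eq_a_pos (by exact e1')
        omega
      · exact hb (t+1) ht1 j (by rw [hsome1, hy]; rfl)
    · cases u
      left
      rw [hsome, hx]
      rfl
    · exact absurd (by rw [hsome, hx]; rfl) (hb t ht j)
  rcases key (S.length - 1) (by omega) with hA | ⟨hD, _⟩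
  · -- all a's : S = replicate (S.length) la
    have hSrep : S = List.replicate S.length (la σ) := by
      rw [List.eq_replicate_iff]
      refine ⟨rfl, fun b hbmem => ?_⟩
      obtain ⟨t, ht, rfl⟩ := List.mem_iff_getElem.mp hbmem
      have hsome : S[t]? = some (S[t]'ht) := List.getElem?_eq_getElem ht
      rcases key t ht with h | ⟨h, hteq⟩
      · rw [hsome] at h; exact Option.some_inj.mp h
      · exfalso
        have hteq' : t = S.length - 1 := by omega
        subst hteq'
        rw [hsome] at h hA
        have := (Option.some_inj.mp h).symm.trans (Option.some_inj.mp hA)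
        exact dol_ne_la this
    have hinf : S <:+: W σ k := infix_of_window hw1
    have hmk : S.length ≤ k := by
      by_contra hgt
      apply not_infix_rep_succ (σ := σ) (k := k)
      have hpre : List.replicate (k+1) (la σ) <+: S := by
        rw [hSrep]
        exact ⟨List.replicate (S.length-(k+1)) (la σ), by
          rw [← List.replicate_add]; congr 1; omega⟩
      exact hpre.isInfix.trans hinf
    have hmk' : S.length ≠ k := by
      intro heq
      have hle : occ (W σ k) S ≤ occ (W σ k) (S ++ [dol σ]) := by
        apply occ_le_occ_snoc
        intro p hp
        have hw := (Finset.mem_filter.mp hp).2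
        have echar : ∀ t, t < S.length → (W σ k)[p+t]? = some (la σ) := by
          intro t ht
          refine (window_getElem? hw ht).trans ?_
          rw [hSrep, List.getElem?_replicate, if_pos (by simpa using ht)]
        have r0 : 1 ≤ p % (k+2) ∧ p % (k+2) ≤ k := by
          have := eq_a_pos (by simpa using echar 0 (by omega))
          exact this
        have hr1 : p % (k+2) = 1 := by
          by_contra hr
          have ht' : k+1 - p % (k+2) < S.length := by omega
          have h3 := eq_a_pos (echar _ ht')
          rw [mod_add_eq rfl (by omega)] at h3
          omega
        have hpk : p + S.length ≤ σ * (k+2) := by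
          have := window_le hw hS
          rwa [length_W] at this
        have hmod : (p + k) % (k+2) = k+1 := by
          rw [mod_add_eq hr1 (by omega)]; omega
        have hlt : p + k < σ * (k+2) := by
          rcases Nat.lt_or_ge (p + k) (σ * (k+2)) with h | h
          · exact h
          · exfalso
            have he : p + k = σ * (k+2) := by omega
            rw [he, Nat.mul_mod_left] at hmod
            omega
        have hd := getW_d' hlt hmod
        have hsnoc := window_snoc hw (by rw [heq]; exact hd)
        simpa using hsnoc
      have := (hmax (dol σ)).2
      omega
    exact Or.inl ⟨S.length, by omega, hSrep⟩
  · -- last is dol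
    have hSrep : S = List.replicate (S.length - 1) (la σ) ++ [dol σ] := by
      have hdl := List.dropLast_append_getLast hS
      have h1 : S.dropLast = List.replicate (S.length - 1) (la σ) := by
        rw [List.eq_replicate_iff]
        refine ⟨by simp, fun b hbmem => ?_⟩
        obtain ⟨t, ht, rfl⟩ := List.mem_iff_getElem.mp hbmem
        rw [List.getElem_dropLast]
        have htl : t < S.length - 1 := by simpa using ht
        have ht2 : t < S.length := by omega
        have hsome : S[t]? = some (S[t]'ht2) := List.getElem?_eq_getElem ht2
        rcases key t ht2 with h | ⟨h, hteq⟩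
        · rw [hsome] at h; exact Option.some_inj.mp h
        · omega
      have h2 : S.getLast hS = dol σ := by
        rw [List.getLast_eq_getElem]
        have hsome : S[S.length-1]? = some (S[S.length-1]'(by omega)) :=
          List.getElem?_eq_getElem (by omega)
        rw [hsome] at hD
        exact Option.some_inj.mp hD
      conv_lhs => rw [← hdl]
      rw [h1, h2]
    have hinf : S <:+: W σ k := infix_of_window hw1
    have him : S.length - 1 ≤ k := by
      by_contra hgt
      apply not_infix_rep_succ (σ := σ) (k := k)
      have hpre : List.replicate (k+1) (la σ) <+: S := by
        rw [hSrep]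
        refine List.IsPrefix.trans ?_ (List.prefix_append _ _)
        exact ⟨List.replicate (S.length - 1 - (k+1)) (la σ), by
          rw [← List.replicate_add]; congr 1; omega⟩
      exact hpre.isInfix.trans hinf
    have heq : S.length - 1 = k := by
      by_contra hne'
      have hilt : S.length - 1 < k := by omega
      have hle : occ (W σ k) S ≤ occ (W σ k) (la σ :: S) := by
        apply occ_le_occ_cons
        intro p hp
        have hw := (Finset.mem_filter.mp hp).2
        have hp1' := (Finset.mem_filter.mp hp).1
        have ed : (W σ k)[p + (S.length - 1)]? = some (dol σ) := by
          refine (window_getElem? hw (by omega)).trans ?_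
          rw [hSrep, List.getElem?_append, if_neg (by simp)]
          simp
        have rd := eq_d_pos ed
        have hrp : p % (k+2) = k + 1 - (S.length - 1) := by
          have hi2 : (S.length - 1) % (k+2) = S.length - 1 := Nat.mod_eq_of_lt (by omega)
          have hadd : (p + (S.length - 1)) % (k+2)
              = (p % (k+2) + (S.length - 1)) % (k+2) := by
            rw [Nat.add_mod, hi2]
          rw [hadd] at rd
          have hr2 : p % (k+2) < k + 2 := Nat.mod_lt _ (by omega)
          rcases Nat.lt_or_ge (p % (k+2) + (S.length - 1)) (k+2) with hc | hc
          · rw [Nat.mod_eq_of_lt hc] at rd; omega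
          · rw [Nat.mod_eq_sub_mod hc,
              Nat.mod_eq_of_lt (by omega)] at rd
            omega
        have hp2 : 2 ≤ p := by
          have := Nat.mod_le p (k+2)
          omega
        have hplt : p + S.length ≤ σ * (k+2) := by
          have := window_le hw hS
          rwa [length_W] at this
        have hpm : (p-1) % (k+2) = k - (S.length - 1) := by
          have := mod_pred hrp (by omega)
          rw [this]
          omega
        have ea : (W σ k)[p-1]? = some (la σ) :=
          getW_a' (by omega) (by omega) (by omega)
        have hwin := window_cons (c := la σ) (p := p-1)
          (by rw [show p-1+1 = p by omega]; exact hw) ea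
        refine ⟨by omega, ?_⟩
        simpa using hwin
      have := (hmax (la σ)).1
      omega
    right
    rw [hSrep, heq]


lemma mem_infix_list {β : Type*} {T S : List β} (h : S <:+: T) :
    S ∈ T.tails.flatMap List.inits := by
  rw [List.mem_flatMap]
  obtain ⟨t, hpre, hsuf⟩ := List.infix_iff_prefix_suffix.mp h
  exact ⟨t, (List.mem_tails _ _).2 hsuf, (List.mem_inits _ _).2 hpre⟩

lemma infix_of_take {β : Type*} {T S : List β} {p n : ℕ} (hn : S.length = n)
    (h : (T.drop p).take n = S) : S <:+: T :=
  infix_of_window (p := p) (by rw [hn]; exact h)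

lemma MRset_W (hσ : 2 ≤ σ) (hk : 2 ≤ k) :
    MRset (W σ k) = (Finset.range k).image (fun i => List.replicate i (la σ))
      ∪ {List.replicate k (la σ) ++ [dol σ]} := by
  ext S
  simp only [MRset, Finset.mem_filter, List.mem_toFinset, Finset.mem_union,
    Finset.mem_image, Finset.mem_range, Finset.mem_singleton]
  constructor
  · rintro ⟨_, hmr⟩
    rcases mr_subset hσ hk hmr with ⟨i, hik, rfl⟩ | rfl
    · exact Or.inl ⟨i, hik, rfl⟩
    · exact Or.inr rfl
  · rintro (⟨i, hik, rfl⟩ | rfl)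
    · rcases Nat.eq_zero_or_pos i with rfl | hi
      · refine ⟨mem_infix_list (by simp), by simpa using max_nil (by omega)⟩
      · refine ⟨mem_infix_list ?_, max_rep hσ hi hik⟩
        have hw := window_as (q := 0) (r := 1) (i := i) (k := k) (σ := σ)
          (by omega) (by omega) (by omega)
        exact infix_of_take (by simp) hw
    · refine ⟨mem_infix_list ?_, max_last hσ (by omega)⟩
      have hw := window_ad (q := 0) (r := 1) (i := k) (k := k) (σ := σ)
        (by omega) (by omega) (by omega)
      exact infix_of_take (by simp) hw

lemma card_alph : Fintype.card (Alph σ) = σ + 2 := by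
  simp [Alph]
  omega

lemma single_infix (hσ : 1 ≤ σ) (hk : 1 ≤ k) (c : Alph σ) : [c] <:+: W σ k := by
  rcases c with u | u | j
  · cases u
    have hw := window_ad (q := 0) (r := k+1) (i := 0) (k := k) (σ := σ)
      (by omega) (by omega) (by omega)
    rw [List.replicate_zero, List.nil_append] at hw
    exact infix_of_take (by simp) hw
  · cases u
    have hw := window_as (q := 0) (r := 1) (i := 1) (k := k) (σ := σ)
      (by omega) (by omega) (by omega)
    rw [show List.replicate 1 (la σ) = [la σ] by simp] at hw
    exact infix_of_take (by simp) hw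
  · have hw := window_b (q := (j : ℕ)) (i := 0) (k := k) (σ := σ) j.2 (by omega)
    have hjj : lb σ ⟨(j : ℕ), j.2⟩ = lb σ j := by congr
    rw [hjj, List.replicate_zero] at hw
    exact infix_of_take (by simp) hw

lemma lext_nil (hσ : 1 ≤ σ) (hk : 1 ≤ k) : lext (W σ k) ([] : List (Alph σ)) = σ + 2 := by
  unfold lext
  rw [Finset.filter_true_of_mem, Finset.card_univ, card_alph]
  intro c _
  exact single_infix hσ hk c

lemma rext_nil (hσ : 1 ≤ σ) (hk : 1 ≤ k) : rext (W σ k) ([] : List (Alph σ)) = σ + 2 := by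
  unfold rext
  rw [Finset.filter_true_of_mem, Finset.card_univ, card_alph]
  intro c _
  simpa using single_infix hσ hk c

lemma lext_rep (hσ : 2 ≤ σ) {i : ℕ} (h1 : 1 ≤ i) (h2 : i < k) :
    lext (W σ k) (List.replicate i (la σ)) = σ + 1 := by
  unfold lext
  have hset : (Finset.univ.filter fun c : Alph σ =>
      (c :: List.replicate i (la σ)) <:+: W σ k) = Finset.univ.erase (dol σ) := by
    ext c
    rw [Finset.mem_filter, Finset.mem_erase]
    simp only [Finset.mem_univ, and_true, true_and]
    constructor
    · intro hinf
      rintro rfl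
      refine not_infix_d_then (t := 0) (by simp) ?_ (Or.inl rfl) hinf
      show (dol σ :: List.replicate i (la σ))[1]? = some (la σ)
      rw [List.getElem?_cons_succ, List.getElem?_replicate, if_pos (by omega)]
    · intro hcd
      rcases c with u | u | j
      · cases u; exact absurd rfl hcd
      · cases u
        have hw := window_as (q := 0) (r := 1) (i := i+1) (k := k) (σ := σ)
          (by omega) (by omega) (by omega)
        rw [List.replicate_succ] at hw
        exact infix_of_take (by simp) hw
      · have hw := window_b (q := (j : ℕ)) (i := i) (k := k) (σ := σ) j.2 (by omega)
        have hjj : lb σ ⟨(j : ℕ), j.2⟩ = lb σ j := by congr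
        rw [hjj] at hw
        exact infix_of_take (by simp) hw
  rw [hset, Finset.card_erase_of_mem (Finset.mem_univ _), Finset.card_univ, card_alph]
  omega

lemma lext_last (hσ : 2 ≤ σ) (hk : 1 ≤ k) :
    lext (W σ k) (List.replicate k (la σ) ++ [dol σ]) = σ := by
  unfold lext
  have hset : (Finset.univ.filter fun c : Alph σ =>
      (c :: (List.replicate k (la σ) ++ [dol σ])) <:+: W σ k)
      = (Finset.univ.erase (dol σ)).erase (la σ) := by
    ext c
    rw [Finset.mem_filter, Finset.mem_erase, Finset.mem_erase]
    simp only [Finset.mem_univ, and_true, true_and]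
    constructor
    · intro hinf
      constructor
      · rintro rfl
        have hpre : List.replicate (k+1) (la σ) <+:
            (la σ :: (List.replicate k (la σ) ++ [dol σ])) := by
          rw [← List.cons_append, ← List.replicate_succ]
          exact List.prefix_append _ _
        exact not_infix_rep_succ (hpre.isInfix.trans hinf)
      · rintro rfl
        refine not_infix_d_then (t := 0) (by simp) ?_ (Or.inl rfl) hinf
        show (dol σ :: (List.replicate k (la σ) ++ [dol σ]))[1]? = some (la σ)
        rw [List.getElem?_cons_succ, List.getElem?_append, if_pos (by simp; omega),
          List.getElem?_replicate, if_pos (by omega)]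
    · rintro ⟨hcl, hcd⟩
      rcases c with u | u | j
      · cases u; exact absurd rfl hcd
      · cases u; exact absurd rfl hcl
      · have hw := window_blk (q := (j : ℕ)) (k := k) (σ := σ) j.2
        have hb : blk σ k ⟨(j : ℕ), j.2⟩
            = lb σ j :: (List.replicate k (la σ) ++ [dol σ]) := by
          rw [blk]
        rw [hb] at hw
        exact infix_of_take (by simp) hw
  have hmem : la σ ∈ Finset.univ.erase (dol σ) :=
    Finset.mem_erase.mpr ⟨fun h => dol_ne_la h.symm, Finset.mem_univ _⟩
  rw [hset, Finset.card_erase_of_mem hmem,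
    Finset.card_erase_of_mem (Finset.mem_univ _), Finset.card_univ, card_alph]
  omega

lemma rext_rep (hσ : 2 ≤ σ) {i : ℕ} (h1 : 1 ≤ i) (h2 : i < k) :
    rext (W σ k) (List.replicate i (la σ)) = 2 := by
  unfold rext
  have hset : (Finset.univ.filter fun c : Alph σ =>
      (List.replicate i (la σ) ++ [c]) <:+: W σ k) = {la σ, dol σ} := by
    ext c
    rw [Finset.mem_filter]
    simp only [Finset.mem_univ, true_and, Finset.mem_insert, Finset.mem_singleton]
    constructor
    · intro hinf
      rcases c with u | u | j
      · cases u; exact Or.inr rfl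
      · cases u; exact Or.inl rfl
      · exact absurd hinf (not_infix_ab h1 j)
    · rintro (rfl | rfl)
      · have hw := window_as (q := 0) (r := 1) (i := i+1) (k := k) (σ := σ)
          (by omega) (by omega) (by omega)
        rw [List.replicate_succ'] at hw
        exact infix_of_take (by simp) hw
      · have hw := window_ad (q := 0) (r := k+1-i) (i := i) (k := k) (σ := σ)
          (by omega) (by omega) (by omega)
        exact infix_of_take (by simp) hw
  rw [hset, Finset.card_insert_of_notMem
    (by simp only [Finset.mem_singleton]; exact fun h => dol_ne_la h.symm),
    Finset.card_singleton]

lemma rext_last (hσ : 2 ≤ σ) (hk : 1 ≤ k) :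
    rext (W σ k) (List.replicate k (la σ) ++ [dol σ]) = σ - 1 := by
  unfold rext
  have hset : (Finset.univ.filter fun c : Alph σ =>
      ((List.replicate k (la σ) ++ [dol σ]) ++ [c]) <:+: W σ k)
      = ((Finset.univ.erase (dol σ)).erase (la σ)).erase (lb σ ⟨0, by omega⟩) := by
    ext c
    rw [Finset.mem_filter, Finset.mem_erase, Finset.mem_erase, Finset.mem_erase]
    simp only [Finset.mem_univ, and_true, true_and]
    have hgk : ((List.replicate k (la σ) ++ [dol σ]) ++ [c])[k]? = some (dol σ) := by
      rw [List.getElem?_append, if_pos (by simp)]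
      rw [List.getElem?_append, if_neg (by simp), List.length_replicate, Nat.sub_self]
      simp
    have hgk1 : ((List.replicate k (la σ) ++ [dol σ]) ++ [c])[k+1]? = some c := by
      rw [List.getElem?_append, if_neg (by simp)]
      simp
    constructor
    · intro hinf
      refine ⟨?_, ?_, ?_⟩
      · rintro rfl
        exact not_infix_b_at (t := k+1) (by omega) hgk1 rfl hinf
      · rintro rfl
        exact not_infix_d_then (t := k) hgk hgk1 (Or.inl rfl) hinf
      · rintro rfl
        exact not_infix_d_then (t := k) hgk hgk1 (Or.inr rfl) hinf
    · rintro ⟨hb0, hla, hdol⟩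
      rcases c with u | u | j
      · cases u; exact absurd rfl hdol
      · cases u; exact absurd rfl hla
      · have hj : 1 ≤ (j : ℕ) := by
          rcases Nat.eq_zero_or_pos (j : ℕ) with h0 | h0
          · exfalso
            apply hb0
            have hj0 : j = ⟨0, by omega⟩ := Fin.ext h0
            rw [hj0]
            rfl
          · exact h0
        have hq1 : ((j : ℕ) - 1) + 1 < σ := by have := j.2; omega
        have hw := window_adb (q := (j : ℕ) - 1) (k := k) (σ := σ) hq1
        have hjj : lb σ ⟨(j : ℕ) - 1 + 1, hq1⟩ = lb σ j := by
          congr 1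
          exact Fin.ext (show (j : ℕ) - 1 + 1 = (j : ℕ) by omega)
        rw [hjj] at hw
        have hidx : ((j : ℕ) - 1) * (k+2) + 1 = ((j : ℕ) - 1) * (k+2) + 1 := rfl
        exact infix_of_take (by simp) hw
  have hmem1 : la σ ∈ Finset.univ.erase (dol σ) :=
    Finset.mem_erase.mpr ⟨fun h => dol_ne_la h.symm, Finset.mem_univ _⟩
  have hmem0 : lb σ ⟨0, by omega⟩ ∈ (Finset.univ.erase (dol σ)).erase (la σ) :=
    Finset.mem_erase.mpr ⟨fun h => la_ne_lb _ h.symm,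
      Finset.mem_erase.mpr ⟨fun h => dol_ne_lb _ h.symm, Finset.mem_univ _⟩⟩
  rw [hset, Finset.card_erase_of_mem hmem0, Finset.card_erase_of_mem hmem1,
    Finset.card_erase_of_mem (Finset.mem_univ _), Finset.card_univ, card_alph]
  omega

end ElEr

/-- `el(T) = (k-1)(σ+1) + σ + (σ+2)` and
`er(T) = 2(k-1) + (σ-1) + (σ+2)`; in particular `el(T) ∈ Θ(kσ)` and `er(T) ∈ Θ(k+σ)`. -/
theorem el_er_W (σ k : ℕ) (hσ : 2 ≤ σ) (hk : 2 ≤ k) :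
    el (W σ k) = (k - 1) * (σ + 1) + σ + (σ + 2) ∧
    er (W σ k) = 2 * (k - 1) + (σ - 1) + (σ + 2) ∧
    k * σ ≤ el (W σ k) ∧ el (W σ k) ≤ 4 * (k * σ) ∧
    k + σ ≤ er (W σ k) ∧ er (W σ k) ≤ 2 * (k + σ) := by
  have hdisj : Disjoint ((Finset.range k).image fun i => List.replicate i (la σ))
      ({List.replicate k (la σ) ++ [dol σ]} : Finset (List (Alph σ))) := by
    rw [Finset.disjoint_singleton_right]
    intro hmem
    obtain ⟨i, hik, heq⟩ := Finset.mem_image.mp hmem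
    have := congrArg List.length heq
    simp only [List.length_replicate, List.length_append, List.length_singleton] at this
    simp only [Finset.mem_range] at hik
    omega
  have hinj : ∀ i ∈ Finset.range k, ∀ j ∈ Finset.range k,
      List.replicate i (la σ) = List.replicate j (la σ) → i = j := by
    intro i _ j _ h
    have := congrArg List.length h
    simpa using this
  have hel : el (W σ k) = (k-1)*(σ+1) + σ + (σ+2) := by
    rw [el, ElEr.MRset_W hσ hk, Finset.sum_union hdisj, Finset.sum_image hinj,
      Finset.sum_singleton, ElEr.lext_last hσ (by omega)]
    have hsplit : ∑ i ∈ Finset.range k, lext (W σ k) (List.replicate i (la σ))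
        = (∑ i ∈ Finset.range (k-1), lext (W σ k) (List.replicate (i+1) (la σ)))
          + lext (W σ k) (List.replicate 0 (la σ)) := by
      rw [show Finset.range k = Finset.range ((k-1)+1) by rw [Nat.sub_add_cancel (by omega)],
        Finset.sum_range_succ']
    rw [hsplit, show List.replicate 0 (la σ) = ([] : List (Alph σ)) from rfl,
      ElEr.lext_nil (by omega) (by omega),
      Finset.sum_congr rfl (fun i hi => ElEr.lext_rep hσ (by omega)
        (by simp only [Finset.mem_range] at hi; omega)),
      Finset.sum_const, Finset.card_range, smul_eq_mul]
    generalize (k-1)*(σ+1) = x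
    omega
  have her : er (W σ k) = 2*(k-1) + (σ-1) + (σ+2) := by
    rw [er, ElEr.MRset_W hσ hk, Finset.sum_union hdisj, Finset.sum_image hinj,
      Finset.sum_singleton, ElEr.rext_last hσ (by omega)]
    have hsplit : ∑ i ∈ Finset.range k, rext (W σ k) (List.replicate i (la σ))
        = (∑ i ∈ Finset.range (k-1), rext (W σ k) (List.replicate (i+1) (la σ)))
          + rext (W σ k) (List.replicate 0 (la σ)) := by
      rw [show Finset.range k = Finset.range ((k-1)+1) by rw [Nat.sub_add_cancel (by omega)],
        Finset.sum_range_succ']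
    rw [hsplit, show List.replicate 0 (la σ) = ([] : List (Alph σ)) from rfl,
      ElEr.rext_nil (by omega) (by omega),
      Finset.sum_congr rfl (fun i hi => ElEr.rext_rep hσ (by omega)
        (by simp only [Finset.mem_range] at hi; omega)),
      Finset.sum_const, Finset.card_range, smul_eq_mul]
    omega
  refine ⟨hel, her, ?_, ?_, ?_, ?_⟩
  · obtain ⟨a, rfl⟩ : ∃ a, k = a + 2 := ⟨k - 2, by omega⟩
    obtain ⟨b, rfl⟩ : ∃ b, σ = b + 2 := ⟨σ - 2, by omega⟩
    rw [hel, show a + 2 - 1 = a + 1 by omega]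
    nlinarith [Nat.zero_le (a*b)]
  · obtain ⟨a, rfl⟩ : ∃ a, k = a + 2 := ⟨k - 2, by omega⟩
    obtain ⟨b, rfl⟩ : ∃ b, σ = b + 2 := ⟨σ - 2, by omega⟩
    rw [hel, show a + 2 - 1 = a + 1 by omega]
    nlinarith [Nat.zero_le (a*b)]
  · rw [her]; omega
  · rw [her]; omega
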